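/- Let E be a real Banach space, a < b real numbers and τ = b - a. If f : ℝ → E is three times continuously differentiable on [a,b], then ‖(f(b) - f(a))/τ - (1/2)(f'(b) + f'(a))‖ ≤ (τ^{3/2}/(2√30)) (∫_a^b ‖f'''(s)‖² ds)^{1/2}. -/

import Mathlib

open Set intervalIntegral MeasureTheory

lemma memL2_of_continuousOn_aux {a b : ℝ} {h : ℝ → ℝ} (hc : ContinuousOn h (Set.Icc a b)) :
    MemLp h 2 (volume.restrict (Set.Ioc a b)) := by
  obtain ⟨C, hC⟩ := isCompact_Icc.exists_bound_of_continuousOn hc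
  refine MemLp.of_bound ?_ C ?_
  · exact (hc.aestronglyMeasurable measurableSet_Icc).mono_measure
      (Measure.restrict_mono Ioc_subset_Icc_self le_rfl)
  · exact (ae_restrict_iff' measurableSet_Ioc).2
      (Filter.Eventually.of_forall fun x hx => hC x (Ioc_subset_Icc_self hx))

/-- L²-type bound for the Crank–Nicolson consistency error:
`‖(f(b) - f(a))/τ - (1/2)(f'(b) + f'(a))‖ ≤ (τ^{3/2}/(2√30)) (∫_a^b ‖f'''(s)‖² ds)^{1/2}`. -/
theorem crank_nicolson_consistency_L2_bound
    {E : Type*} [NormedAddCommGroup E] [NormedSpace ℝ E] [CompleteSpace E]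
    (a b τ : ℝ) (hab : a < b) (hτ : τ = b - a)
    (f f' f'' f''' : ℝ → E)
    (hf : ∀ t ∈ Icc a b, HasDerivWithinAt f (f' t) (Icc a b) t)
    (hf' : ∀ t ∈ Icc a b, HasDerivWithinAt f' (f'' t) (Icc a b) t)
    (hf'' : ∀ t ∈ Icc a b, HasDerivWithinAt f'' (f''' t) (Icc a b) t)
    (hf''' : ContinuousOn f''' (Icc a b)) :
    ‖(1 / τ) • (f b - f a) - (1 / 2 : ℝ) • (f' b + f' a)‖
      ≤ (τ ^ ((3 : ℝ) / 2) / (2 * Real.sqrt 30))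
          * (∫ s in a..b, ‖f''' s‖ ^ 2) ^ ((1 : ℝ) / 2) := by
  subst hτ
  have hba : (0:ℝ) < b - a := by linarith
  set w : ℝ → ℝ := fun s => (s - a) * (s - b) / 2 with hw
  have hwcont : Continuous w := by fun_prop
  have hcf : ContinuousOn f (Icc a b) := fun t ht => (hf t ht).continuousWithinAt
  have hcf' : ContinuousOn f' (Icc a b) := fun t ht => (hf' t ht).continuousWithinAt
  have hcf'' : ContinuousOn f'' (Icc a b) := fun t ht => (hf'' t ht).continuousWithinAt
  have huIcc : uIcc a b = Icc a b := uIcc_of_le hab.le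
  have hint : IntervalIntegrable (fun s => w s • f''' s) volume a b := by
    apply ContinuousOn.intervalIntegrable
    rw [huIcc]
    exact hwcont.continuousOn.smul hf'''
  -- FTC identity
  set g : ℝ → E := fun t => w t • f'' t - (t - (a+b)/2) • f' t + f t with hg
  have hgcont : ContinuousOn g (Icc a b) :=
    (((hwcont.continuousOn.smul hcf'')).sub
      (((continuous_id.sub continuous_const).continuousOn).smul hcf')).add hcf
  have hgderiv : ∀ t ∈ Ioo a b, HasDerivWithinAt g (w t • f''' t) (Ioi t) t := by
    intro t ht
    have htmem : t ∈ Icc a b := Ioo_subset_Icc_self ht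
    have hnhds : Icc a b ∈ nhds t := Icc_mem_nhds ht.1 ht.2
    have h2 : HasDerivAt f'' (f''' t) t := (hf'' t htmem).hasDerivAt hnhds
    have h1 : HasDerivAt f' (f'' t) t := (hf' t htmem).hasDerivAt hnhds
    have h0 : HasDerivAt f (f' t) t := (hf t htmem).hasDerivAt hnhds
    have hwd : HasDerivAt w (t - (a+b)/2) t := by
      have : HasDerivAt (fun s : ℝ => (s - a) * (s - b) / 2)
          (((1:ℝ) * (t - b) + (t - a) * 1)/2) t :=
        (((hasDerivAt_id t).sub_const a).mul ((hasDerivAt_id t).sub_const b)).div_const 2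
      convert this using 1
      ring
    have hw'd : HasDerivAt (fun s : ℝ => s - (a+b)/2) 1 t := (hasDerivAt_id t).sub_const _
    have hgd : HasDerivAt g (w t • f''' t) t := by
      have hA : HasDerivAt (fun s => w s • f'' s)
          (w t • f''' t + (t - (a+b)/2) • f'' t) t := hwd.smul h2
      have hB : HasDerivAt (fun s => (s - (a+b)/2) • f' s)
          ((t - (a+b)/2) • f'' t + (1:ℝ) • f' t) t := hw'd.smul h1
      have := (hA.sub hB).add h0
      convert this using 1
      · rfl
      module
    exact hgd.hasDerivWithinAt
  have key : (∫ s in a..b, w s • f''' s)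
      = f b - f a - ((b-a)/2) • (f' b + f' a) := by
    rw [intervalIntegral.integral_eq_sub_of_hasDeriv_right_of_le hab.le hgcont hgderiv hint]
    simp only [hg, hw]
    module
  -- rewrite LHS
  have hLHS : (1 / (b-a)) • (f b - f a) - (1 / 2 : ℝ) • (f' b + f' a)
      = (1/(b-a)) • ∫ s in a..b, w s • f''' s := by
    have h12 : (1/2 : ℝ) = (1/(b-a)) * ((b-a)/2) := by field_simp
    rw [key, h12, ← smul_smul, ← smul_sub]
  rw [hLHS, norm_smul, Real.norm_eq_abs, abs_of_pos (by positivity)]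
  -- Cauchy-Schwarz
  set μ := volume.restrict (Ioc a b) with hμ
  have hG : ContinuousOn (fun s => ‖f''' s‖) (Icc a b) := hf'''.norm
  have hp2 : Real.HolderConjugate 2 2 := Real.HolderConjugate.two_two
  have hmemw : MemLp (fun s => |w s|) (ENNReal.ofReal 2) μ := by
    rw [show ENNReal.ofReal 2 = 2 by norm_num]
    exact memL2_of_continuousOn_aux (hwcont.abs.continuousOn)
  have hmemG : MemLp (fun s => ‖f''' s‖) (ENNReal.ofReal 2) μ := by
    rw [show ENNReal.ofReal 2 = 2 by norm_num]
    exact memL2_of_continuousOn_aux hG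
  have holder := integral_mul_le_Lp_mul_Lq_of_nonneg hp2
    (Filter.Eventually.of_forall fun x => abs_nonneg (w x))
    (Filter.Eventually.of_forall fun x => norm_nonneg (f''' x))
    hmemw hmemG
  have hrw1 : (∫ x, |w x| ^ (2:ℝ) ∂μ) = ∫ s in a..b, (w s)^2 := by
    rw [intervalIntegral.integral_of_le hab.le]
    apply MeasureTheory.integral_congr_ae
    filter_upwards with x
    rw [Real.rpow_two, sq_abs]
  have hrw2 : (∫ x, ‖f''' x‖ ^ (2:ℝ) ∂μ) = ∫ s in a..b, ‖f''' s‖^2 := by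
    rw [intervalIntegral.integral_of_le hab.le]
    apply MeasureTheory.integral_congr_ae
    filter_upwards with x
    rw [Real.rpow_two]
  rw [hrw1, hrw2] at holder
  -- value of ∫ w^2
  have hw2 : (∫ s in a..b, (w s)^2) = (b-a)^5/120 := by
    have hP : ∀ s ∈ uIcc a b, HasDerivAt
        (fun s => ((s-a)^5/5 - (b-a)*(s-a)^4/2 + (b-a)^2*(s-a)^3/3)/4) ((w s)^2) s := by
      intro s _
      have hb : HasDerivAt (fun u : ℝ => u - a) 1 s := (hasDerivAt_id s).sub_const a
      have : HasDerivAt (fun s => ((s-a)^5/5 - (b-a)*(s-a)^4/2 + (b-a)^2*(s-a)^3/3)/4)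
          ((((5:ℕ)*(s-a)^4*1)/5 - (b-a)*(((4:ℕ)*(s-a)^3*1))/2 + (b-a)^2*(((3:ℕ)*(s-a)^2*1))/3)/4) s :=
        ((((hb.pow 5).div_const 5).sub (((hb.pow 4).const_mul (b-a)).div_const 2)).add
          ((hb.pow 3).const_mul ((b-a)^2) |>.div_const 3)).div_const 4
      convert this using 1
      push_cast
      simp only [hw]
      ring
    rw [intervalIntegral.integral_eq_sub_of_hasDerivAt hP
      (((hwcont.pow 2).continuousOn).intervalIntegrable)]
    ring
  rw [hw2] at holder
  -- combine
  have hI : ‖∫ s in a..b, w s • f''' s‖ ≤ ((b-a)^5/120) ^ ((1:ℝ)/2)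
      * (∫ s in a..b, ‖f''' s‖^2) ^ ((1:ℝ)/2) := by
    calc ‖∫ s in a..b, w s • f''' s‖ ≤ ∫ s in a..b, ‖w s • f''' s‖ :=
          intervalIntegral.norm_integral_le_integral_norm hab.le
      _ = ∫ x, |w x| * ‖f''' x‖ ∂μ := by
          rw [intervalIntegral.integral_of_le hab.le]
          apply MeasureTheory.integral_congr_ae
          filter_upwards with x
          rw [norm_smul, Real.norm_eq_abs]
      _ ≤ _ := holder
  have h120 : Real.sqrt 120 = 2 * Real.sqrt 30 := by
    rw [show (120:ℝ) = 2^2*30 by norm_num, Real.sqrt_mul (by positivity),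
      Real.sqrt_sq (by norm_num)]
  have h5 : (((b-a)^5/120 : ℝ)) ^ ((1:ℝ)/2) = (b-a) ^ ((5:ℝ)/2) / (2*Real.sqrt 30) := by
    rw [← Real.sqrt_eq_rpow, Real.sqrt_div (by positivity) 120, h120]
    congr 1
    rw [Real.sqrt_eq_rpow, ← Real.rpow_natCast (b-a) 5, ← Real.rpow_mul hba.le]
    norm_num
  have hcoef : (1/(b-a)) * (((b-a)^5/120) ^ ((1:ℝ)/2))
      = (b-a) ^ ((3:ℝ)/2) / (2 * Real.sqrt 30) := by
    rw [h5, show ((5:ℝ)/2) = 1 + (3:ℝ)/2 by norm_num, Real.rpow_add hba, Real.rpow_one]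
    field_simp
  calc (1/(b-a)) * ‖∫ s in a..b, w s • f''' s‖
      ≤ (1/(b-a)) * (((b-a)^5/120) ^ ((1:ℝ)/2) * (∫ s in a..b, ‖f''' s‖^2) ^ ((1:ℝ)/2)) :=
        mul_le_mul_of_nonneg_left hI (by positivity)
    _ = (b-a) ^ ((3:ℝ)/2) / (2 * Real.sqrt 30) * (∫ s in a..b, ‖f''' s‖^2) ^ ((1:ℝ)/2) := by
        rw [← mul_assoc, hcoef]
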